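/- Let H be an r-uniform multihypergraph with n vertices and m edges, and let t ≥ 1 with r/n ≥ 4t/m. If T is a uniformly random set of t distinct edges of H, then the expected size of the intersection of the edges in T is at least ((r/n − 2t/m))^t · n ≥ (r/2n)^t · n. -/

import Mathlib

lemma stmt9_choose_lb (m d t : ℕ) : m.choose t * (d - t) ^ t ≤ d.choose t * m ^ t := by
  have h1 : (d - t) ^ t ≤ d.descFactorial t :=
    le_trans (Nat.pow_le_pow_left (by omega) t) (Nat.pow_sub_le_descFactorial d t)
  have h2 : m.descFactorial t ≤ m ^ t := Nat.descFactorial_le_pow m t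
  have h := Nat.mul_le_mul h2 h1
  rw [Nat.descFactorial_eq_factorial_mul_choose, Nat.descFactorial_eq_factorial_mul_choose] at h
  have hf : 0 < t.factorial := t.factorial_pos
  have : t.factorial * (m.choose t * (d - t) ^ t) ≤ t.factorial * (d.choose t * m ^ t) := by
    calc t.factorial * (m.choose t * (d - t) ^ t) = t.factorial * m.choose t * (d - t) ^ t := by ring
    _ ≤ m ^ t * (t.factorial * d.choose t) := h
    _ = t.factorial * (d.choose t * m ^ t) := by ring
  exact Nat.le_of_mul_le_mul_left this hf

set_option maxHeartbeats 1600000 in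
/-- let `H` be an `r`-uniform multihypergraph with `n` vertices and
`m` edges, and `t ≥ 1` with `r/n ≥ 4t/m`.  If `T` is a uniformly random set of `t`
distinct edges, then the expected size of the intersection of the edges of `T`
(i.e. the average over all `t`-element sets of edges) is at least
`(r/n − 2t/m)^t · n`, which is in turn at least `(r/(2n))^t · n`. -/
theorem stmt_9 (n m r t : ℕ) (hm : 0 < m) (ht : 1 ≤ t)
    (I : Type*) [Fintype I] (hI : Fintype.card I = m)
    (E : I → Finset (Fin n)) (hunif : ∀ i, (E i).card = r)
    (hcond : (4 * t : ℝ) / m ≤ (r : ℝ) / n) :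
    ((r : ℝ) / (2 * n)) ^ t * n ≤ ((r : ℝ) / n - 2 * t / m) ^ t * n ∧
    ((r : ℝ) / n - 2 * t / m) ^ t * n ≤
      (∑ T ∈ (Finset.univ : Finset I).powersetCard t,
          ({v : Fin n | ∀ i ∈ T, v ∈ E i}.ncard : ℝ)) /
        ((Finset.univ : Finset I).powersetCard t).card := by
  classical
  have hm' : (0:ℝ) < m := by exact_mod_cast hm
  have ht' : (1:ℝ) ≤ t := by exact_mod_cast ht
  -- n and r are positive
  have hrn : (0:ℝ) < (r:ℝ) / n := lt_of_lt_of_le (by positivity) hcond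
  have hn : 0 < n := by
    by_contra h
    have : n = 0 := by omega
    rw [this] at hrn; simp at hrn
  have hn' : (0:ℝ) < n := by exact_mod_cast hn
  -- r ≤ n
  have hInh : Nonempty I := Fintype.card_pos_iff.mp (by omega)
  obtain ⟨i0⟩ := hInh
  have hrlen : r ≤ n := by
    have := Finset.card_le_card (Finset.subset_univ (E i0))
    rwa [hunif, Finset.card_univ, Fintype.card_fin] at this
  have h4 : (4:ℝ) * t * n ≤ r * m := by
    rw [div_le_div_iff₀ hm' hn'] at hcond; linarith
  have htm : 4 * t ≤ m := by
    have hrn1 : (r:ℝ) ≤ n := by exact_mod_cast hrlen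
    have : (4:ℝ) * t * n ≤ n * m := by nlinarith
    have : (4:ℝ) * t ≤ m := by
      have := (mul_le_mul_iff_left₀ hn').mp (by linarith : (4*t:ℝ) * n ≤ m * n)
      linarith
    exact_mod_cast this
  -- the number of t-subsets
  have hCval : ((Finset.univ : Finset I).powersetCard t).card = m.choose t := by
    rw [Finset.card_powersetCard, Finset.card_univ, hI]
  have hCpos : 0 < m.choose t := Nat.choose_pos (by omega)
  have hC' : (0:ℝ) < (m.choose t : ℝ) := by exact_mod_cast hCpos
  -- degrees
  set d : Fin n → ℕ := fun v => (Finset.univ.filter (fun i => v ∈ E i)).card with hd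
  have hsumd : ∑ v : Fin n, d v = m * r := by
    simp only [hd, Finset.card_filter]
    rw [Finset.sum_comm]
    have : ∀ i : I, (∑ v : Fin n, if v ∈ E i then 1 else 0) = r := by
      intro i
      rw [← Finset.card_filter, Finset.filter_univ_mem, hunif]
    rw [Finset.sum_congr rfl fun i _ => this i, Finset.sum_const, Finset.card_univ, hI,
      smul_eq_mul]
  -- double counting : the main sum equals ∑_v choose (d v) t
  have hA : ∑ T ∈ (Finset.univ : Finset I).powersetCard t,
      ({v : Fin n | ∀ i ∈ T, v ∈ E i}.ncard : ℝ) = ∑ v : Fin n, ((d v).choose t : ℝ) := by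
    have hnc : ∀ T : Finset I, ({v : Fin n | ∀ i ∈ T, v ∈ E i}.ncard)
        = (Finset.univ.filter (fun v : Fin n => ∀ i ∈ T, v ∈ E i)).card := by
      intro T
      rw [← Set.ncard_coe_finset]
      congr 1
      ext v; simp
    have hA' : ∑ T ∈ (Finset.univ : Finset I).powersetCard t,
        (Finset.univ.filter (fun v : Fin n => ∀ i ∈ T, v ∈ E i)).card
        = ∑ v : Fin n, (d v).choose t := by
      simp only [Finset.card_filter]
      rw [Finset.sum_comm]
      refine Finset.sum_congr rfl fun v _ => ?_
      rw [← Finset.card_filter]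
      have : ((Finset.univ : Finset I).powersetCard t).filter (fun T => ∀ i ∈ T, v ∈ E i)
          = (Finset.univ.filter (fun i => v ∈ E i)).powersetCard t := by
        ext T
        simp only [Finset.mem_filter, Finset.mem_powersetCard, Finset.subset_iff,
          Finset.mem_univ, true_and]
        tauto
      rw [this, Finset.card_powersetCard]
    calc ∑ T ∈ (Finset.univ : Finset I).powersetCard t,
        ({v : Fin n | ∀ i ∈ T, v ∈ E i}.ncard : ℝ)
        = ∑ T ∈ (Finset.univ : Finset I).powersetCard t,
            ((Finset.univ.filter (fun v : Fin n => ∀ i ∈ T, v ∈ E i)).card : ℝ) := by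
          refine Finset.sum_congr rfl fun T _ => ?_
          rw [hnc T]
      _ = ∑ v : Fin n, ((d v).choose t : ℝ) := by exact_mod_cast hA'
  -- the truncated shifted degrees
  set x : Fin n → ℝ := fun v => ((d v - t : ℕ) : ℝ) with hx
  have hx0 : ∀ v ∈ (Finset.univ : Finset (Fin n)), 0 ≤ x v := fun v _ => Nat.cast_nonneg _
  -- pointwise bound
  have hper : ∀ v : Fin n, (m.choose t : ℝ) * x v ^ t ≤ ((d v).choose t : ℝ) * m ^ t := by
    intro v
    have h := (Nat.cast_le (α := ℝ)).mpr (stmt9_choose_lb m (d v) t)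
    push_cast at h
    simpa [hx] using h
  -- lower bound on the sum of x
  have hsx : (m:ℝ) * r - n * t ≤ ∑ v : Fin n, x v := by
    have hnat : m * r ≤ (∑ v : Fin n, (d v - t)) + n * t := by
      calc m * r = ∑ v : Fin n, d v := hsumd.symm
        _ ≤ ∑ v : Fin n, ((d v - t) + t) := Finset.sum_le_sum fun v _ => by omega
        _ = (∑ v : Fin n, (d v - t)) + n * t := by
            rw [Finset.sum_add_distrib, Finset.sum_const, Finset.card_univ, Fintype.card_fin,
              smul_eq_mul]
    have : (m * r : ℝ) ≤ (∑ v : Fin n, x v) + n * t := by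
      have := (Nat.cast_le (α := ℝ)).mpr hnat
      push_cast at this
      simpa [hx] using this
    linarith
  have hmrnt : (0:ℝ) ≤ (m:ℝ) * r - n * t := by nlinarith
  -- t = s + 1
  obtain ⟨s, rfl⟩ : ∃ s, t = s + 1 := ⟨t - 1, by omega⟩
  push_cast at hsx hmrnt
  -- power mean inequality
  have hpm : (∑ v : Fin n, x v) ^ (s+1) / (n:ℝ) ^ s ≤ ∑ v : Fin n, x v ^ (s+1) := by
    have := pow_sum_div_card_le_sum_pow (s := (Finset.univ : Finset (Fin n)))
      (f := x) hx0 s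
    rwa [Finset.card_univ, Fintype.card_fin] at this
  -- key common bound
  have e1 : (r:ℝ)/n - 2*(s+1)/m = ((r:ℝ)*m - 2*(s+1)*n)/(n*m) := by
    field_simp
  have h0 : (0:ℝ) ≤ (r:ℝ)/n - 2*(s+1)/m := by
    rw [e1]
    apply div_nonneg _ (by positivity)
    push_cast at h4 ⊢
    nlinarith
  have hle : (r:ℝ)/n - 2*(s+1)/m ≤ ((m:ℝ)*r - n*(s+1))/(m*n) := by
    rw [e1, div_le_div_iff₀ (by positivity) (by positivity)]
    push_cast
    nlinarith [hn', hm', mul_pos hn' hm', (by positivity : (0:ℝ) ≤ ((s:ℝ)+1) * n * (n*m))]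
  have ht1 : (0:ℝ) ≤ (s:ℝ) + 1 := by positivity
  constructor
  · -- first inequality
    have hhalf : (r:ℝ)/(2*n) ≤ (r:ℝ)/n - 2*(s+1)/m := by
      have e2 : (r:ℝ)/(2*n) = ((r:ℝ)*m - 2*(s+1)*n)/(n*m) -
          ((r:ℝ)*m - 4*(s+1)*n)/(2*(n*m)) := by
        field_simp; ring
      rw [e1, e2]
      have : (0:ℝ) ≤ ((r:ℝ)*m - 4*(s+1)*n)/(2*(n*m)) := by
        apply div_nonneg _ (by positivity)
        push_cast at h4
        nlinarith
      linarith
    have hb : (0:ℝ) ≤ (r:ℝ)/(2*n) := by positivity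
    push_cast
    exact mul_le_mul_of_nonneg_right (pow_le_pow_left₀ hb hhalf (s+1)) (by positivity)
  · -- main inequality
    rw [hA, hCval, le_div_iff₀ hC']
    push_cast
    calc ((r:ℝ)/n - 2*(s+1)/m) ^ (s+1) * n * (m.choose (s+1) : ℝ)
        ≤ (((m:ℝ)*r - n*(s+1))/(m*n)) ^ (s+1) * n * (m.choose (s+1) : ℝ) := by
          exact mul_le_mul_of_nonneg_right
            (mul_le_mul_of_nonneg_right (pow_le_pow_left₀ h0 hle _) (by positivity))
            (by positivity)
      _ = (((m:ℝ)*r - n*(s+1)) ^ (s+1) / (n:ℝ) ^ s) * ((m.choose (s+1) : ℝ) / m ^ (s+1)) := by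
          rw [div_pow]
          field_simp
          ring
      _ ≤ ((∑ v : Fin n, x v) ^ (s+1) / (n:ℝ) ^ s) * ((m.choose (s+1) : ℝ) / m ^ (s+1)) := by
          refine mul_le_mul_of_nonneg_right ?_ (by positivity)
          exact div_le_div_of_nonneg_right (pow_le_pow_left₀ hmrnt hsx (s+1)) (by positivity)
      _ ≤ (∑ v : Fin n, x v ^ (s+1)) * ((m.choose (s+1) : ℝ) / m ^ (s+1)) :=
          mul_le_mul_of_nonneg_right hpm (by positivity)
      _ = (∑ v : Fin n, (m.choose (s+1) : ℝ) * x v ^ (s+1)) / m ^ (s+1) := by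
          rw [← Finset.mul_sum]
          ring
      _ ≤ (∑ v : Fin n, ((d v).choose (s+1) : ℝ) * m ^ (s+1)) / m ^ (s+1) := by
          have hnum := Finset.sum_le_sum (fun v (_ : v ∈ (Finset.univ : Finset (Fin n))) => hper v)
          exact div_le_div_of_nonneg_right hnum (by positivity)
      _ = ∑ v : Fin n, ((d v).choose (s+1) : ℝ) := by
          rw [← Finset.sum_mul, mul_div_assoc, div_self (by positivity), mul_one]
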